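/- Let z ∈ ℂ and let {a_n}, {z_n} be an infinite continued fraction expansion and iteration sequence of z over the Eisenstein integers 𝔈 with respect to a nearest integer algorithm, with Q-pair {p_n}, {q_n}. Suppose M > 0 is such that |a_n| ≤ M for all n ≥ 0. Then for all n ≥ 0, |q_n·z − p_n| ≥ 1/((M + 2)·|q_n|). -/

import Mathlib

open Complex

/-- The primitive cube root of unity ω = (−1 + √3·i)/2. -/
noncomputable def eisOmega : ℂ := (-1 + Real.sqrt 3 * Complex.I) / 2

/-- `a : ℂ` is an Eisenstein integer: `a = x + y·ω` with `x, y ∈ ℤ`. -/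
def IsEis (a : ℂ) : Prop := ∃ x y : ℤ, a = (x : ℂ) + (y : ℂ) * eisOmega


lemma eisOmega_re : eisOmega.re = -(1/2) := by
  simp [eisOmega, Complex.div_re, Complex.normSq]
  norm_num

lemma eisOmega_im : eisOmega.im = Real.sqrt 3 / 2 := by
  simp [eisOmega, Complex.div_im, Complex.normSq]

lemma eis_re (x y : ℤ) : ((x:ℂ) + (y:ℂ)*eisOmega).re = (x:ℝ) - y/2 := by
  simp [Complex.add_re, Complex.mul_re, eisOmega_re, eisOmega_im]; ring

lemma eis_im (x y : ℤ) : ((x:ℂ) + (y:ℂ)*eisOmega).im = y * Real.sqrt 3 / 2 := by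
  simp [Complex.add_im, Complex.mul_im, eisOmega_re, eisOmega_im]; ring

lemma quarter_cover' (s α β : ℝ) (hs2 : s^2 = 3) (hs0 : 0 < s) (hα0 : 0 ≤ α) (hα1 : α ≤ 1/2)
    (hβ0 : 0 ≤ β) (h : α + s*β ≤ 1) : α^2 + β^2 ≤ 1/3 := by
  have h1 : 0 ≤ 2*α*(1 - 2*α) := mul_nonneg (by linarith) (by linarith)
  have h2 : 0 ≤ (1 - α - s*β) * (1 - α + s*β) :=
    mul_nonneg (by linarith) (by nlinarith [mul_nonneg hs0.le hβ0])
  nlinarith [h1, h2]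

lemma rect_cover (α β : ℝ) (hα0 : 0 ≤ α) (hα1 : α ≤ 1/2) (hβ0 : 0 ≤ β) (hβ1 : β ≤ Real.sqrt 3 / 2) :
    α^2 + β^2 ≤ 1/3 ∨ (1/2 - α)^2 + (Real.sqrt 3/2 - β)^2 ≤ 1/3 := by
  have hs2 : (Real.sqrt 3)^2 = 3 := Real.sq_sqrt (by norm_num)
  have hs0 : 0 < Real.sqrt 3 := Real.sqrt_pos.mpr (by norm_num)
  by_cases h : α + Real.sqrt 3 * β ≤ 1
  · exact Or.inl (quarter_cover' _ _ _ hs2 hs0 hα0 hα1 hβ0 h)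
  · push_neg at h
    refine Or.inr (quarter_cover' _ _ _ hs2 hs0 (by linarith) (by linarith) (by linarith) ?_)
    nlinarith

lemma abs_le_of_normSq_le {w : ℂ} {r : ℝ} (hr : 0 < r) (h : Complex.normSq w ≤ r^2) :
    ‖w‖ ≤ r := by
  rw [← Complex.sq_norm] at h
  nlinarith [norm_nonneg w]

/-- covering radius of the Eisenstein lattice. -/
lemma eis_cover (w : ℂ) : ∃ b : ℂ, IsEis b ∧ ‖w - b‖ ≤ 1 / Real.sqrt 3 := by
  have hs2 : (Real.sqrt 3)^2 = 3 := Real.sq_sqrt (by norm_num)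
  have hs0 : 0 < Real.sqrt 3 := Real.sqrt_pos.mpr (by norm_num)
  set s := Real.sqrt 3 with hs
  have main : ∃ b : ℂ, IsEis b ∧ Complex.normSq (w - b) ≤ 1/3 := by
    set y : ℤ := ⌊w.im / (s/2)⌋ with hy
    set β : ℝ := w.im - y * (s/2) with hβ
    have hβ0 : 0 ≤ β := by
      have h1 := Int.floor_le (w.im / (s/2))
      have h2 : (y:ℝ) * (s/2) ≤ w.im / (s/2) * (s/2) :=
        mul_le_mul_of_nonneg_right h1 (by positivity)
      rw [div_mul_cancel₀ _ (by positivity : (s/2 : ℝ) ≠ 0)] at h2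
      rw [hβ]; linarith
    have hβ1 : β ≤ s/2 := by
      have h1 := Int.lt_floor_add_one (w.im / (s/2))
      have h2 : w.im / (s/2) * (s/2) < ((y:ℝ) + 1) * (s/2) :=
        mul_lt_mul_of_pos_right h1 (by positivity)
      rw [div_mul_cancel₀ _ (by positivity : (s/2 : ℝ) ≠ 0)] at h2
      rw [hβ]; nlinarith
    set x1 : ℤ := round (w.re + (y:ℝ)/2) with hx1
    set α0 : ℝ := w.re + (y:ℝ)/2 - x1 with hα0
    have hα0le : |α0| ≤ 1/2 := by rw [hα0, hx1]; exact abs_sub_round _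
    have key : ∀ (x' y' : ℤ), Complex.normSq (w - ((x':ℂ) + (y':ℂ)*eisOmega))
        = (w.re - ((x':ℝ) - (y':ℝ)/2))^2 + (w.im - y' * s / 2)^2 := by
      intro x' y'
      rw [Complex.normSq_apply, Complex.sub_re, Complex.sub_im, eis_re, eis_im]
      ring
    rcases le_or_gt 0 α0 with hpos | hneg
    · have habs : α0 ≤ 1/2 := by rwa [_root_.abs_of_nonneg hpos] at hα0le
      rcases rect_cover α0 β hpos habs hβ0 hβ1 with hc | hc
      · refine ⟨(x1:ℂ) + (y:ℂ)*eisOmega, ⟨x1, y, rfl⟩, ?_⟩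
        rw [key x1 y]
        have e1 : w.re - ((x1:ℝ) - (y:ℝ)/2) = α0 := by rw [hα0]; ring
        have e2 : w.im - (y:ℝ) * s / 2 = β := by rw [hβ]; ring
        rw [e1, e2]; exact hc
      · refine ⟨((x1+1 : ℤ):ℂ) + ((y+1 : ℤ):ℂ)*eisOmega, ⟨x1+1, y+1, rfl⟩, ?_⟩
        rw [key (x1+1) (y+1)]
        have e1 : w.re - (((x1+1:ℤ):ℝ) - ((y+1:ℤ):ℝ)/2) = -(1/2 - α0) := by
          push_cast; rw [hα0]; ring
        have e2 : w.im - ((y+1:ℤ):ℝ) * s / 2 = -(s/2 - β) := by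
          push_cast; rw [hβ]; ring
        rw [e1, e2, neg_sq, neg_sq]; exact hc
    · have hpos : 0 ≤ -α0 := by linarith
      have habs : -α0 ≤ 1/2 := by rwa [abs_of_neg hneg] at hα0le
      rcases rect_cover (-α0) β hpos habs hβ0 hβ1 with hc | hc
      · refine ⟨(x1:ℂ) + (y:ℂ)*eisOmega, ⟨x1, y, rfl⟩, ?_⟩
        rw [key x1 y]
        have e1 : w.re - ((x1:ℝ) - (y:ℝ)/2) = α0 := by rw [hα0]; ring
        have e2 : w.im - (y:ℝ) * s / 2 = β := by rw [hβ]; ring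
        rw [e1, e2]
        nlinarith [hc]
      · refine ⟨((x1 : ℤ):ℂ) + ((y+1 : ℤ):ℂ)*eisOmega, ⟨x1, y+1, rfl⟩, ?_⟩
        rw [key x1 (y+1)]
        have e1 : w.re - ((x1:ℝ) - ((y+1:ℤ):ℝ)/2) = 1/2 - -α0 := by
          push_cast; rw [hα0]; ring
        have e2 : w.im - ((y+1:ℤ):ℝ) * s / 2 = -(s/2 - β) := by
          push_cast; rw [hβ]; ring
        rw [e1, e2, neg_sq]; exact hc
  obtain ⟨b, hb, hle⟩ := main
  refine ⟨b, hb, abs_le_of_normSq_le (by positivity) ?_⟩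
  rw [div_pow, one_pow, hs2]
  exact hle

lemma eis_no_two (x y : ℤ) : x^2 - x*y + y^2 ≠ 2 := by
  intro h
  have hall : ∀ u v : ZMod 8, u^2 - u*v + v^2 ≠ 2 := by decide
  have h8 : ((x : ZMod 8))^2 - (x : ZMod 8)*(y : ZMod 8) + (y : ZMod 8)^2 = 2 := by
    have := congrArg (fun t : ℤ => (t : ZMod 8)) h
    push_cast at this
    exact this
  exact hall x y h8

lemma eis_normSq (x y : ℤ) :
    Complex.normSq ((x:ℂ) + (y:ℂ)*eisOmega) = ((x^2 - x*y + y^2 : ℤ) : ℝ) := by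
  have hs2 : (Real.sqrt 3)^2 = 3 := Real.sq_sqrt (by norm_num)
  rw [Complex.normSq_apply, eis_re, eis_im]
  push_cast
  linear_combination ((y:ℝ)^2/4) * hs2

lemma eis_norm_gap {a : ℂ} (h : IsEis a) (h1 : 1 < ‖a‖) :
    Real.sqrt 3 ≤ ‖a‖ := by
  obtain ⟨x, y, rfl⟩ := h
  set w := (x:ℂ) + (y:ℂ)*eisOmega
  have hns : Complex.normSq w = ((x^2 - x*y + y^2 : ℤ) : ℝ) := eis_normSq x y
  have habs2 : 1 < Complex.normSq w := by
    rw [← Complex.sq_norm]; nlinarith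
  have hN : (1 : ℤ) < x^2 - x*y + y^2 := by exact_mod_cast hns ▸ habs2
  have hN3 : (3 : ℤ) ≤ x^2 - x*y + y^2 := by
    rcases lt_or_ge (x^2 - x*y + y^2) 3 with h3 | h3
    · exfalso; exact eis_no_two x y (by omega)
    · exact h3
  have h3 : (3:ℝ) ≤ Complex.normSq w := by rw [hns]; exact_mod_cast hN3
  calc Real.sqrt 3 ≤ Real.sqrt (Complex.normSq w) := Real.sqrt_le_sqrt h3
    _ = ‖w‖ := (Complex.norm_def _).symm


lemma key_ineq (s M x : ℝ) (hs2 : s^2 = 3) (hs0 : 0 < s) (hMs : s ≤ M)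
    (hx0 : 0 < x) (hA : 0 ≤ 1 - s*x) (hB : 0 ≤ x*(M*s+1) - s) :
    1 ≤ (M+2) * (x - s/2*x^2) := by
  have hs17 : 1.7 ≤ s := by nlinarith
  have hs18 : s ≤ 1.8 := by nlinarith
  have hP1 : 0 ≤ (M+2)*((M*s+1)*((1 - s*x)*(x*(M*s+1) - s))) := by
    have h1 : (0:ℝ) ≤ M*s + 1 := by nlinarith
    have hAB := mul_nonneg hA hB
    have h2 : (0:ℝ) ≤ M + 2 := by linarith
    exact mul_nonneg h2 (mul_nonneg h1 hAB)
  have hP2 : 0 ≤ (M+2)*((M*s-2)*(x*(M*s+1) - s)) := by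
    have h1 : (0:ℝ) ≤ M*s - 2 := by nlinarith
    have h2 : (0:ℝ) ≤ M + 2 := by linarith
    exact mul_nonneg h2 (mul_nonneg h1 hB)
  have hP3 : 0 ≤ (12 - 5*s)*(M - s) := by
    apply mul_nonneg <;> linarith
  have hP4 : (0:ℝ) ≤ 10*s - 17 := by linarith
  have hid : 2*(M*s+1)^2*((M+2)*(x - s/2*x^2) - 1)
      = (M+2)*((M*s+1)*((1 - s*x)*(x*(M*s+1) - s)))
        + (M+2)*((M*s-2)*(x*(M*s+1) - s))
        + (12 - 5*s)*(M - s) + (10*s - 17) := by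
    linear_combination (-s*M^2*x - 2*s*M*x - M*x + 4*M - 2*x - 5) * hs2
  have h2 : (0:ℝ) < 2*(M*s+1)^2 := by
    have h1 : (0:ℝ) < M*s + 1 := by nlinarith
    positivity
  nlinarith [hid, hP1, hP2, hP3, hP4, h2]

lemma upper_step (s Q1 Q2 E1 x : ℝ) (hs2 : s^2 = 3) (hs0 : 0 < s)
    (hx0 : 0 < x) (hxs : x*s ≤ 1) (htri : Q2*E1 ≤ 1 + Q1*(x*E1)) (hih : Q1*E1 ≤ s/2) :
    Q2*(x*E1) ≤ s/2 := by
  have e1 : Q2*(x*E1) ≤ x + (Q1*E1)*x^2 := by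
    have := mul_le_mul_of_nonneg_right htri hx0.le
    nlinarith [this]
  have e2 : x + (Q1*E1)*x^2 ≤ x + (s/2)*x^2 := by
    nlinarith [mul_nonneg (sub_nonneg.mpr hih) (sq_nonneg x)]
  have hsx : s^2*x^2 = 3*x^2 := by rw [hs2]
  have h3 : 0 ≤ (1 - s*x)*(3 + s*x) :=
    mul_nonneg (by linarith) (by nlinarith [mul_pos hs0 hx0])
  have e3 : x + (s/2)*x^2 ≤ s/2 := by nlinarith [h3, hsx, hs0, hs2]
  linarith

lemma lower_step (s M Q1 Q2 E1 x : ℝ) (hs2 : s^2 = 3) (hs0 : 0 < s) (hMs : s ≤ M)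
    (hQ1 : 0 ≤ Q1) (hE1 : 0 ≤ E1) (hx0 : 0 < x) (hxs : x*s ≤ 1)
    (hB : 0 ≤ x*(M*s+1) - s) (htri : 1 - Q1*(x*E1) ≤ Q2*E1) (hih : Q1*E1 ≤ s/2) :
    1/(M+2) ≤ Q2*(x*E1) := by
  have hM2 : (0:ℝ) < M + 2 := by linarith
  have e1 : x - (Q1*E1)*x^2 ≤ Q2*(x*E1) := by
    have := mul_le_mul_of_nonneg_right htri hx0.le
    nlinarith [this]
  have e2 : x - (s/2)*x^2 ≤ x - (Q1*E1)*x^2 := by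
    nlinarith [mul_nonneg (sub_nonneg.mpr hih) (sq_nonneg x)]
  have hkey := key_ineq s M x hs2 hs0 hMs hx0 (by linarith) hB
  rw [div_le_iff₀ hM2]
  nlinarith [hkey, e1, e2]

/-- If |aₙ| ≤ M for all n, then for all n ≥ 0,
|qₙ·z − pₙ| ≥ 1/((M + 2)·|qₙ|).  (Here `p (n+1)`, `q (n+1)` denote pₙ, qₙ.) -/
theorem eisenstein_cf_error_lower_bound_of_bounded
    (z : ℂ) (a zs : ℕ → ℂ)
    (ha : ∀ n, IsEis (a n))
    (hz0 : zs 0 = z)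
    (hnear : ∀ n, ∀ b : ℂ, IsEis b → ‖zs n - a n‖ ≤ ‖zs n - b‖)
    (hne : ∀ n, zs n ≠ a n)
    (hit : ∀ n, zs (n + 1) = (zs n - a n)⁻¹)
    (p q : ℕ → ℂ)
    (hp0 : p 0 = 1) (hp1 : p 1 = a 0)
    (hprec : ∀ n, p (n + 2) = a (n + 1) * p (n + 1) + p n)
    (hq0 : q 0 = 0) (hq1 : q 1 = 1)
    (hqrec : ∀ n, q (n + 2) = a (n + 1) * q (n + 1) + q n)
    (hqne : ∀ n, q (n + 1) ≠ 0)
    (M : ℝ) (hM : 0 < M) (haM : ∀ n, ‖a n‖ ≤ M)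
    :
    ∀ n : ℕ,
      1 / ((M + 2) * ‖q (n + 1)‖) ≤
        ‖q (n + 1) * z - p (n + 1)‖ := by
  have hs2 : (Real.sqrt 3)^2 = 3 := Real.sq_sqrt (by norm_num)
  have hs0 : 0 < Real.sqrt 3 := Real.sqrt_pos.mpr (by norm_num)
  set s := Real.sqrt 3 with hs
  have hs17 : 1.7 ≤ s := by nlinarith
  have hs18 : s ≤ 1.8 := by nlinarith
  -- basic facts about f n = zs n - a n
  have hF : ∀ n, zs n - a n ≠ 0 := fun n => sub_ne_zero.mpr (hne n)
  have hFpos : ∀ n, 0 < ‖zs n - a n‖ :=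
    fun n => norm_pos_iff.mpr (hF n)
  have hFle : ∀ n, ‖zs n - a n‖ * s ≤ 1 := by
    intro n
    obtain ⟨b, hb, hble⟩ := eis_cover (zs n)
    have h1 := (hnear n b hb).trans hble
    rw [le_div_iff₀ hs0] at h1
    exact h1
  have hzF : ∀ n, ‖zs (n+1)‖ * ‖zs n - a n‖ = 1 := by
    intro n
    rw [hit n, norm_inv]
    exact inv_mul_cancel₀ (norm_ne_zero_iff.mpr (hF n))
  have hzge : ∀ n, s ≤ ‖zs (n+1)‖ := by
    intro n
    nlinarith [hzF n, hFle n, hFpos n]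
  have hzle : ∀ n, ‖zs (n+1)‖ * s ≤ M * s + 1 := by
    intro n
    have h1 : ‖zs (n+1)‖ ≤ ‖a (n+1)‖ + ‖zs (n+1) - a (n+1)‖ := by
      calc ‖zs (n+1)‖ = ‖a (n+1) + (zs (n+1) - a (n+1))‖ := by
            congr 1; ring
        _ ≤ _ := norm_add_le _ _
    have h2 := hFle (n+1)
    have h3 := haM (n+1)
    nlinarith [norm_nonneg (zs (n+1) - a (n+1))]
  have hFge : ∀ n, 0 ≤ ‖zs n - a n‖ * (M*s+1) - s := by
    intro n
    have h1 := hzF n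
    have h2 := hzle n
    nlinarith [hFpos n, norm_nonneg (zs (n+1))]
  -- M ≥ √3
  have hMs : s ≤ M := by
    have hinv : ‖zs 1 - a 1‖ ≤ 0.6 := by
      have h2 := hFle 1
      nlinarith [hFpos 1]
    have h1 : s - 0.6 ≤ ‖a 1‖ := by
      have h2 := hzge 0
      have h4 : ‖zs 1‖ ≤ ‖a 1‖ + ‖zs 1 - a 1‖ := by
        calc ‖zs 1‖ = ‖a 1 + (zs 1 - a 1)‖ := by congr 1; ring
          _ ≤ _ := norm_add_le _ _
      linarith
    have h2 : 1 < ‖a 1‖ := by linarith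
    exact (eis_norm_gap (ha 1) h2).trans (haM 1)
  -- error sequence E n = q n * z - p n
  have hE0 : q 0 * z - p 0 = -1 := by rw [hq0, hp0]; ring
  have hEstep : ∀ n, q (n+1) * z - p (n+1) = -(zs n - a n) * (q n * z - p n) := by
    intro n
    induction n with
    | zero =>
      rw [hq0, hp0, hq1, hp1, hz0]; ring
    | succ k ih =>
      show q (k+2) * z - p (k+2) = -(zs (k+1) - a (k+1)) * (q (k+1) * z - p (k+1))
      have hEk : q k * z - p k = -(zs (k+1)) * (q (k+1) * z - p (k+1)) := by
        rw [hit k, ih, show -(zs k - a k)⁻¹ * (-(zs k - a k) * (q k * z - p k))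
          = ((zs k - a k)⁻¹ * (zs k - a k)) * (q k * z - p k) from by ring,
          inv_mul_cancel₀ (hF k), one_mul]
      have hrec : q (k+2) * z - p (k+2)
          = a (k+1) * (q (k+1) * z - p (k+1)) + (q k * z - p k) := by
        rw [hprec k, hqrec k]; ring
      rw [hrec, hEk]; ring
  have hEabs : ∀ n, ‖q (n+1) * z - p (n+1)‖
      = ‖zs n - a n‖ * ‖q n * z - p n‖ := by
    intro n; rw [hEstep n, norm_mul, norm_neg]
  -- determinant identity
  have hDval : ∀ n, ‖q n * p (n+1) - q (n+1) * p n‖ = 1 := by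
    intro n
    induction n with
    | zero =>
      rw [hq0, hq1, hp0]
      simp
    | succ k ih =>
      show ‖q (k+1) * p (k+2) - q (k+2) * p (k+1)‖ = 1
      have h1 : q (k+1) * p (k+2) - q (k+2) * p (k+1)
          = -(q k * p (k+1) - q (k+1) * p k) := by
        rw [hprec k, hqrec k]; ring
      rw [h1, norm_neg]; exact ih
  have hDet : ∀ n, ‖q (n+1) * (q n * z - p n) - q n * (q (n+1) * z - p (n+1))‖ = 1 := by
    intro n
    have h1 : q (n+1) * (q n * z - p n) - q n * (q (n+1) * z - p (n+1))
        = q n * p (n+1) - q (n+1) * p n := by ring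
    rw [h1]; exact hDval n
  -- triangle-inequality consequences of the determinant identity
  have htriU : ∀ n, ‖q (n+2)‖ * ‖q (n+1) * z - p (n+1)‖
      ≤ 1 + ‖q (n+1)‖ * ‖q (n+2) * z - p (n+2)‖ := by
    intro n
    have h2 : ‖q (n+2) * (q (n+1) * z - p (n+1))‖
        ≤ ‖q (n+2) * (q (n+1) * z - p (n+1)) - q (n+1) * (q (n+2) * z - p (n+2))‖
          + ‖q (n+1) * (q (n+2) * z - p (n+2))‖ := by
      calc ‖q (n+2) * (q (n+1) * z - p (n+1))‖
          = ‖(q (n+2) * (q (n+1) * z - p (n+1))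
              - q (n+1) * (q (n+2) * z - p (n+2))) + q (n+1) * (q (n+2) * z - p (n+2))‖ := by
            congr 1; ring
        _ ≤ _ := norm_add_le _ _
    rw [hDet (n+1), norm_mul, norm_mul] at h2
    exact h2
  have htriL : ∀ n, 1 - ‖q (n+1)‖ * ‖q (n+2) * z - p (n+2)‖
      ≤ ‖q (n+2)‖ * ‖q (n+1) * z - p (n+1)‖ := by
    intro n
    have h2 := norm_sub_le (q (n+2) * (q (n+1) * z - p (n+1)))
      (q (n+1) * (q (n+2) * z - p (n+2)))
    rw [hDet (n+1), norm_mul, norm_mul] at h2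
    linarith
  -- u n = |q (n+1)| * |E (n+1)| : upper bound s/2
  have hupper : ∀ n, ‖q (n+1)‖ * ‖q (n+1) * z - p (n+1)‖ ≤ s/2 := by
    intro n
    induction n with
    | zero =>
      have h1 := hEabs 0
      rw [hz0, hE0, norm_neg, norm_one, mul_one] at h1
      have h2 := hFle 0
      rw [hz0] at h2
      have h3 := hFpos 0
      rw [hz0] at h3
      rw [h1, hq1, norm_one, one_mul]
      nlinarith [h2, h3]
    | succ k ih =>
      show ‖q (k+2)‖ * ‖q (k+2) * z - p (k+2)‖ ≤ s/2
      have habs2 := hEabs (k+1)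
      rw [habs2]
      refine upper_step s (‖q (k+1)‖) (‖q (k+2)‖)
        (‖q (k+1) * z - p (k+1)‖) (‖zs (k+1) - a (k+1)‖)
        hs2 hs0 (hFpos (k+1)) (hFle (k+1)) ?_ ih
      have h1 := htriU k
      rw [habs2] at h1
      linarith [h1]
  -- lower bound 1/(M+2)
  have hM2 : (0:ℝ) < M + 2 := by linarith
  have hlower : ∀ n, 1/(M+2) ≤ ‖q (n+1)‖ * ‖q (n+1) * z - p (n+1)‖ := by
    intro n
    induction n with
    | zero =>
      have h1 := hEabs 0
      rw [hz0, hE0, norm_neg, norm_one, mul_one] at h1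
      have h2 := hFge 0
      rw [hz0] at h2
      have h3 := hFpos 0
      rw [hz0] at h3
      have hMs1 : (0:ℝ) < M*s + 1 := by positivity
      rw [h1, hq1, norm_one, one_mul, div_le_iff₀ hM2]
      nlinarith [h2, h3, hMs1, mul_nonneg hM2.le h2]
    | succ k ih =>
      show 1/(M+2) ≤ ‖q (k+2)‖ * ‖q (k+2) * z - p (k+2)‖
      have habs2 := hEabs (k+1)
      rw [habs2]
      refine lower_step s M (‖q (k+1)‖) (‖q (k+2)‖)
        (‖q (k+1) * z - p (k+1)‖) (‖zs (k+1) - a (k+1)‖)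
        hs2 hs0 hMs (norm_nonneg _) (norm_nonneg _)
        (hFpos (k+1)) (hFle (k+1)) (hFge (k+1)) ?_ (hupper k)
      have h1 := htriL k
      rw [habs2] at h1
      linarith [h1]
  -- conclusion
  intro n
  have hQpos : 0 < ‖q (n+1)‖ := norm_pos_iff.mpr (hqne n)
  have hu := hlower n
  rw [div_le_iff₀ (by positivity)]
  rw [div_le_iff₀ hM2] at hu
  nlinarith [hu]
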